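/- Fix a natural number N and let ≈ be the equivalence relation on the set of monotone functions [0,1] → Fin (N+1) defined by f ≈ g iff the set {t ∈ [0,1] | f(t) ≠ g(t)} is finite. Then the map s ↦ [f_s] is a bijection from the set {s : Fin N → [0,1] | s is monotone} (equivalently, from the standard geometric simplex {(s₁,…,s_N) ∈ ℝ^N : 0 ≤ s₁ ≤ … ≤ s_N ≤ 1}) onto the quotient of the set of monotone functions [0,1] → Fin (N+1) by ≈. -/

import Mathlib

open scoped Classical

/-- The step function associated with a tuple `s : Fin N → [0,1]`:
`f_s(t) = card {i : Fin N | s i ≤ t}`, an element of `Fin (N+1)`. -/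
noncomputable def stepFun {N : ℕ} (s : Fin N → unitInterval) (t : unitInterval) :
    Fin (N + 1) :=
  ⟨(Finset.univ.filter fun i => s i ≤ t).card,
    Nat.lt_succ_of_le ((Finset.card_filter_le _ _).trans (by simp))⟩

lemma stepFun_monotone {N : ℕ} (s : Fin N → unitInterval) : Monotone (stepFun s) := by
  intro t t' htt'
  refine Fin.mk_le_mk.mpr (Finset.card_le_card ?_)
  intro i hi
  simp only [Finset.mem_filter] at hi ⊢
  exact ⟨hi.1, hi.2.trans htt'⟩

/-- The equivalence relation on monotone functions `[0,1] → Fin (N+1)` identifying two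
functions iff they differ on a finite set. -/
def finDiffSetoid (N : ℕ) : Setoid {f : unitInterval → Fin (N + 1) // Monotone f} where
  r f g := {t | f.1 t ≠ g.1 t}.Finite
  iseqv := by
    constructor
    · intro f
      simp
    · intro f g hfg
      exact hfg.subset fun t ht => Ne.symm ht
    · intro f g h hfg hgh
      refine (hfg.union hgh).subset fun t ht => ?_
      by_cases hc : f.1 t = g.1 t
      · exact Or.inr fun he => ht (hc.trans he)
      · exact Or.inl hc

instance : Fact ((0:ℝ) ≤ 1) := ⟨zero_le_one⟩

lemma stepFun_ne_of_lt {N : ℕ} {s s' : Fin N → unitInterval} (hs : Monotone s)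
    (hs' : Monotone s') {i : Fin N} {t : unitInterval} (h1 : s i ≤ t) (h2 : t < s' i) :
    stepFun s t ≠ stepFun s' t := by
  have hA : (i : ℕ) + 1 ≤ (stepFun s t : ℕ) := by
    rw [← Fin.card_Iic i]
    show _ ≤ (Finset.univ.filter fun j => s j ≤ t).card
    refine Finset.card_le_card fun j hj => ?_
    simp only [Finset.mem_Iic] at hj
    simp only [stepFun, Finset.mem_filter, Finset.mem_univ, true_and]
    exact (hs hj).trans h1
  have hB : (stepFun s' t : ℕ) ≤ (i : ℕ) := by
    rw [← Fin.card_Iio i]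
    show (Finset.univ.filter fun j => s' j ≤ t).card ≤ _
    refine Finset.card_le_card fun j hj => ?_
    simp only [stepFun, Finset.mem_filter, Finset.mem_univ, true_and] at hj
    simp only [Finset.mem_Iio]
    by_contra hij
    exact absurd ((hs' (le_of_not_gt hij)).trans hj) (not_le.mpr h2)
  intro he
  rw [he] at hA
  omega

lemma card_val_lt (N m : ℕ) (h : m ≤ N) :
    (Finset.univ.filter fun i : Fin N => (i : ℕ) < m).card = m := by
  have himg : (Finset.univ.filter fun i : Fin N => (i : ℕ) < m).image Fin.val
      = Finset.range m := by
    ext k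
    simp only [Finset.mem_image, Finset.mem_filter, Finset.mem_univ, true_and,
      Finset.mem_range]
    constructor
    · rintro ⟨i, hi, rfl⟩; exact hi
    · intro hk; exact ⟨⟨k, lt_of_lt_of_le hk h⟩, hk, rfl⟩
  have h2 := Finset.card_image_of_injective
    (Finset.univ.filter fun i : Fin N => (i : ℕ) < m) Fin.val_injective
  rw [himg, Finset.card_range] at h2
  exact h2.symm


/-- the map `s ↦ [f_s]` is a bijection from the set of monotone tuples
`s : Fin N → [0,1]` (equivalently, the standard geometric `N`-simplex
`{0 ≤ s₁ ≤ … ≤ s_N ≤ 1}`) onto the quotient of the set of monotone functions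
`[0,1] → Fin (N+1)` by the relation `f ≈ g ↔ {t | f t ≠ g t}` is finite. -/
theorem statement6 (N : ℕ) :
    Function.Bijective (fun s : {s : Fin N → unitInterval // Monotone s} =>
      Quotient.mk (finDiffSetoid N) ⟨stepFun s.1, stepFun_monotone s.1⟩) := by
  constructor
  · rintro ⟨s, hs⟩ ⟨s', hs'⟩ h
    have hd : {t | stepFun s t ≠ stepFun s' t}.Finite := Quotient.exact h
    ext i : 2
    by_contra hne
    rcases lt_or_gt_of_ne hne with hlt | hlt
    · exact (Set.Ico_infinite hlt) (hd.subset fun t ht =>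
        stepFun_ne_of_lt hs hs' ht.1 ht.2)
    · exact (Set.Ico_infinite hlt) (hd.subset fun t ht =>
        Ne.symm (stepFun_ne_of_lt hs' hs ht.1 ht.2))
  · rintro q
    obtain ⟨⟨f, hf⟩, rfl⟩ := Quotient.exists_rep q
    set S : Fin N → Set unitInterval := fun i => {t | (i : ℕ) < (f t : ℕ)} with hS
    set s : Fin N → unitInterval := fun i => sInf (S i) with hsdef
    have hmono : Monotone s := by
      intro i j hij
      exact sInf_le_sInf fun t ht => lt_of_le_of_lt (show (i:ℕ) ≤ (j:ℕ) from hij) ht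
    refine ⟨⟨s, hmono⟩, Quotient.sound ?_⟩
    refine (Set.finite_range s).subset fun t ht => ?_
    by_contra hnr
    apply ht
    simp only [Set.mem_range, not_exists] at hnr
    have hiff : ∀ i : Fin N, s i ≤ t ↔ (i : ℕ) < (f t : ℕ) := by
      intro i
      constructor
      · intro hle
        have hlt : s i < t := lt_of_le_of_ne hle (hnr i)
        by_contra hft
        have : t ≤ s i := le_sInf fun t' ht' => by
          by_contra htt'
          push_neg at htt'
          exact hft (lt_of_lt_of_le ht' (show (f t' : ℕ) ≤ (f t : ℕ) from hf htt'.le))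
        exact absurd hlt (not_lt.mpr this)
      · intro hft
        exact sInf_le hft
    have : stepFun s t = f t := by
      apply Fin.ext
      show (Finset.univ.filter fun i => s i ≤ t).card = (f t : ℕ)
      have : (Finset.univ.filter fun i => s i ≤ t)
          = (Finset.univ.filter fun i : Fin N => (i : ℕ) < (f t : ℕ)) := by
        apply Finset.filter_congr
        intro i _
        simp [hiff i]
      rw [this, card_val_lt N _ (Nat.lt_succ_iff.mp (f t).isLt)]
    exact this
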